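/- Let H be an N×N real symmetric tridiagonal matrix with nonzero off-diagonal entries J_n, and suppose ⟨e_1, H^{2m+1} e_1⟩ = 0 for all integers m ≥ 0. Then all diagonal entries of H vanish: B_n = 0 for all n. -/
import Mathlib


open Matrix

/-- Real symmetric tridiagonal matrix: diagonal `B`, off-diagonal `J`. -/
def triR (N : ℕ) (B J : ℕ → ℝ) : Matrix (Fin N) (Fin N) ℝ :=
  Matrix.of fun i j =>
    if (i : ℕ) = j then B i
    else if (i : ℕ) + 1 = j then J i
    else if (j : ℕ) + 1 = i then J j
    else 0

/-- If a real symmetric tridiagonal matrix `H` with nonzero off-diagonal entries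
satisfies `⟨e₁, H^{2m+1} e₁⟩ = 0` for all `m ≥ 0`, then all its diagonal entries
vanish. -/
theorem diagonal_zero_of_odd_moments_zero
    (N : ℕ) (hN : 0 < N) (B J : ℕ → ℝ)
    (hJ : ∀ i, i + 1 < N → J i ≠ 0)
    (hmom : ∀ m : ℕ, (triR N B J ^ (2 * m + 1)) ⟨0, hN⟩ ⟨0, hN⟩ = 0) :
    ∀ n, n < N → B n = 0 := by
  set H := triR N B J with hHdef
  have triR_apply : ∀ (i j : Fin N), H i j =
      if (i : ℕ) = j then B i else if (i : ℕ) + 1 = j then J i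
      else if (j : ℕ) + 1 = i then J j else 0 := fun i j => rfl
  -- symmetry of H and of its powers
  have hsym : ∀ i j : Fin N, H i j = H j i := by
    intro i j
    rw [triR_apply, triR_apply]
    split_ifs <;> first | rfl | omega | simp_all
  have hT : H.transpose = H := by
    ext i j; exact hsym j i
  have hsn : ∀ k, ∀ a b : Fin N, (H ^ k) a b = (H ^ k) b a := by
    intro k a b
    have hTn : (H ^ k).transpose = H ^ k := by rw [transpose_pow, hT]
    exact (congrFun (congrFun hTn a) b).symm
  intro n
  induction n using Nat.strong_induction_on with
  | _ n IH =>
    intro hn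
    have hB : ∀ i, i < n → B i = 0 := fun i hi => IH i hi (hi.trans hn)
    -- key structural claim about H^k e₁ for k ≤ n
    have key : ∀ k, k ≤ n → ∀ i : Fin N,
        ((k < (i : ℕ) ∨ (i : ℕ) % 2 ≠ k % 2) → (H ^ k) i ⟨0, hN⟩ = 0)
        ∧ ((i : ℕ) = k → (H ^ k) i ⟨0, hN⟩ = ∏ j ∈ Finset.range k, J j) := by
      intro k
      induction k with
      | zero =>
        intro _ i
        constructor
        · intro h
          have hine : i ≠ ⟨0, hN⟩ := by
            intro he; subst he; simp at h
          simp [pow_zero, one_apply, hine]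
        · intro h
          have : i = ⟨0, hN⟩ := Fin.ext h
          subst this
          simp [pow_zero, one_apply]
      | succ k ih =>
        intro hk
        have hk' : k ≤ n := Nat.le_of_succ_le hk
        have IHk := ih hk'
        intro i
        have expand : (H ^ (k + 1)) i ⟨0, hN⟩ = ∑ j, H i j * (H ^ k) j ⟨0, hN⟩ := by
          rw [pow_succ', mul_apply]
        constructor
        · intro hcase
          rw [expand]
          apply Finset.sum_eq_zero
          intro j _
          rw [triR_apply]
          split_ifs with h1 h2 h3
          · -- diagonal term
            by_cases hin : (i : ℕ) < n
            · rw [hB _ hin]; ring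
            · rw [(IHk j).1 (Or.inl (by omega))]; ring
          · -- j = i + 1
            rw [(IHk j).1 (by omega)]; ring
          · -- j = i - 1
            rw [(IHk j).1 (by omega)]; ring
          · ring
        · intro hi
          have hkN : k < N := lt_of_le_of_lt hk' hn
          rw [expand]
          rw [Finset.sum_eq_single (⟨k, hkN⟩ : Fin N)]
          · rw [triR_apply]
            rw [if_neg (by simp; omega), if_neg (by simp; omega), if_pos (by simp; omega)]
            rw [(IHk ⟨k, hkN⟩).2 (by simp), Finset.prod_range_succ]
            simp; ring
          · intro j _ hj
            rw [triR_apply]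
            split_ifs with h1 h2 h3
            · rw [(IHk j).1 (Or.inr (by omega))]; ring
            · rw [(IHk j).1 (Or.inl (by omega))]; ring
            · exact absurd (Fin.ext (by simp; omega)) hj
            · ring
          · intro h; exact absurd (Finset.mem_univ _) h
    -- now use the moment condition for m = n
    have hmn := hmom n
    set c : ℝ := ∏ j ∈ Finset.range n, J j with hc
    have hcne : c ≠ 0 := by
      rw [hc]
      apply Finset.prod_ne_zero_iff.mpr
      intro j hjmem
      exact hJ j (by have := Finset.mem_range.mp hjmem; omega)
    set In : Fin N := ⟨n, hn⟩ with hIn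
    have hInval : (In : ℕ) = n := rfl
    have Kn := key n le_rfl
    have vsupp : ∀ j : Fin N, (n < (j : ℕ) ∨ (j : ℕ) % 2 ≠ n % 2) →
        (H ^ n) j ⟨0, hN⟩ = 0 := fun j h => (Kn j).1 h
    have vIn : (H ^ n) In ⟨0, hN⟩ = c := (Kn In).2 rfl
    have expand2 : (H ^ (2 * n + 1)) ⟨0, hN⟩ ⟨0, hN⟩
        = ∑ j, (∑ i, (H ^ n) i ⟨0, hN⟩ * H i j) * (H ^ n) j ⟨0, hN⟩ := by
      have hpow : H ^ (2 * n + 1) = (H ^ n * H) * H ^ n := by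
        rw [← pow_succ, ← pow_add]; ring_nf
      rw [hpow, mul_apply]
      refine Finset.sum_congr rfl fun j _ => ?_
      rw [mul_apply]
      congr 1
      refine Finset.sum_congr rfl fun i _ => ?_
      rw [hsn n ⟨0, hN⟩ i]
    rw [expand2] at hmn
    rw [Finset.sum_eq_single In] at hmn
    · rw [Finset.sum_eq_single In] at hmn
      · rw [vIn, triR_apply] at hmn
        rw [if_pos rfl] at hmn
        have hBIn : B (In : ℕ) = B n := by rw [hInval]
        rw [hBIn] at hmn
        have : B n * (c * c) = 0 := by linarith [hmn]
        rcases mul_eq_zero.mp this with h | h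
        · exact h
        · exact absurd h (mul_ne_zero hcne hcne)
      · intro i _ hi
        rw [triR_apply]
        split_ifs with h1 h2 h3
        · exact absurd (Fin.ext h1) hi
        · rw [vsupp i (Or.inr (by rw [hInval] at h2; omega))]; ring
        · rw [vsupp i (Or.inl (by rw [hInval] at h3; omega))]; ring
        · ring
      · intro h; exact absurd (Finset.mem_univ _) h
    · intro j _ hj
      by_cases hv : n < (j : ℕ) ∨ (j : ℕ) % 2 ≠ n % 2
      · rw [vsupp j hv]; ring
      · push_neg at hv
        have hjlt : (j : ℕ) < n := by
          rcases Nat.lt_or_ge (j : ℕ) n with h | h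
          · exact h
          · exfalso; exact hj (Fin.ext (by rw [hInval]; omega))
        have hinner : (∑ i, (H ^ n) i ⟨0, hN⟩ * H i j) = 0 := by
          apply Finset.sum_eq_zero
          intro i _
          rw [triR_apply]
          split_ifs with h1 h2 h3
          · rw [show B (i : ℕ) = 0 from hB _ (by omega)]; ring
          · rw [vsupp i (Or.inr (by omega))]; ring
          · rw [vsupp i (Or.inr (by omega))]; ring
          · ring
        rw [hinner]; ring
    · intro h; exact absurd (Finset.mem_univ _) h
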